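/- Let S = {((1+|z|)⁻¹, −z, z) : z ∈ (−1,1)} ⊂ ℝ_{>0} × (−1,1) × (−1,1). The function Φ₀ is discontinuous at every point of S; more precisely, for every point p ∈ S and every open neighbourhood U of p in ℝ_{>0} × (−1,1) × (−1,1), the image Φ₀(U) contains the full interval [0, 6/π²]. -/

import Mathlib

open Real Set MeasureTheory

noncomputable def Υ (x : ℝ) : ℝ := if x ≤ 0 then 0 else if x < 1 then x else 1

noncomputable def Φ₀ (ξ w z : ℝ) : ℝ :=
  if w + z ≠ 0 then (6 / π ^ 2) * Υ (1 + (ξ⁻¹ - max |w| |z| - 1) / |w + z|)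
  else if ξ⁻¹ < 1 + |w| then 0 else 6 / π ^ 2

lemma Υ_of_mem (t : ℝ) (h0 : 0 ≤ t) (h1 : t ≤ 1) : Υ t = t := by
  unfold Υ; split_ifs <;> linarith

theorem stmt4 (D : Set (ℝ × ℝ × ℝ))
    (hD : D = Ioi (0 : ℝ) ×ˢ Ioo (-1 : ℝ) 1 ×ˢ Ioo (-1 : ℝ) 1)
    (z : ℝ) (hz : z ∈ Ioo (-1 : ℝ) 1)
    (p : ℝ × ℝ × ℝ) (hp : p = ((1 + |z|)⁻¹, -z, z)) :
    ¬ ContinuousWithinAt (fun q : ℝ × ℝ × ℝ => Φ₀ q.1 q.2.1 q.2.2) D p ∧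
    ∀ U : Set (ℝ × ℝ × ℝ), IsOpen U → p ∈ U →
      Icc (0 : ℝ) (6 / π ^ 2) ⊆
        (fun q : ℝ × ℝ × ℝ => Φ₀ q.1 q.2.1 q.2.2) '' (U ∩ D) := by
  have hπ : (0:ℝ) < 6 / π ^ 2 := by positivity
  have hπ2 : (π:ℝ) ^ 2 ≠ 0 := by positivity
  have habs : |z| < 1 := abs_lt.mpr ⟨hz.1, hz.2⟩
  have key : ∀ U : Set (ℝ × ℝ × ℝ), IsOpen U → p ∈ U →
      Icc (0 : ℝ) (6 / π ^ 2) ⊆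
        (fun q : ℝ × ℝ × ℝ => Φ₀ q.1 q.2.1 q.2.2) '' (U ∩ D) := by
    intro U hU hpU c hc
    obtain ⟨ε, hε, hball⟩ := Metric.isOpen_iff.mp hU p hpU
    set t : ℝ := c * (π ^ 2 / 6) with ht_def
    have ht0 : 0 ≤ t := by
      have := hc.1
      positivity
    have ht1 : t ≤ 1 := by
      have h2 : c * π ^ 2 ≤ 6 := (le_div_iff₀ (by positivity : (0:ℝ) < π ^ 2)).mp hc.2
      rw [ht_def]; linarith
    set δ : ℝ := min (ε / 2) ((1 - |z|) / 2) with hδ_def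
    have hδ0 : 0 < δ := lt_min (by linarith) (by linarith)
    have hδε : δ < ε := by
      have h := min_le_left (ε / 2) ((1 - |z|) / 2)
      rw [hδ_def]; linarith
    have hδz : δ < 1 - |z| := by
      have h := min_le_right (ε / 2) ((1 - |z|) / 2)
      rw [hδ_def]; linarith
    set ξ : ℝ := (1 + |z| + δ * t)⁻¹ with hξ_def
    set w : ℝ := if 0 ≤ z then -z - δ else -z + δ with hw_def
    have habsw : |w| = |z| + δ := by
      rw [hw_def]
      rcases le_or_gt 0 z with h | h
      · rw [if_pos h, abs_of_nonneg h, abs_of_nonpos (by linarith)]; ring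
      · rw [if_neg (not_le.mpr h), abs_of_neg h, abs_of_nonneg (by linarith)]
    have hwz : |w + z| = δ := by
      rw [hw_def]
      rcases le_or_gt 0 z with h | h
      · rw [if_pos h]
        rw [show -z - δ + z = -δ by ring, abs_neg, abs_of_pos hδ0]
      · rw [if_neg (not_le.mpr h)]
        rw [show -z + δ + z = δ by ring, abs_of_pos hδ0]
    have hwz0 : w + z ≠ 0 := by
      intro h
      rw [h, abs_zero] at hwz
      linarith
    have hden : (0:ℝ) < 1 + |z| + δ * t := by positivity
    have hξinv : ξ⁻¹ = 1 + |z| + δ * t := by rw [hξ_def, inv_inv]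
    refine ⟨(ξ, w, z), ⟨hball ?_, ?_⟩, ?_⟩
    · -- dist < ε
      rw [Metric.mem_ball, hp, Prod.dist_eq, Prod.dist_eq]
      simp only [Real.dist_eq]
      have h1 : |ξ - (1 + |z|)⁻¹| < ε := by
        have ha : (0:ℝ) < 1 + |z| := by positivity
        have hle : ξ ≤ (1 + |z|)⁻¹ := by
          apply inv_anti₀ ha
          nlinarith
        have hdiff : (1 + |z|)⁻¹ - ξ ≤ δ := by
          rw [hξ_def]
          rw [inv_sub_inv (ne_of_gt ha) (ne_of_gt hden)]
          rw [div_le_iff₀ (by positivity)]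
          have h1 : (1:ℝ) ≤ (1 + |z|) * (1 + |z| + δ * t) := by
            nlinarith [abs_nonneg z, mul_nonneg hδ0.le ht0]
          nlinarith [mul_le_mul_of_nonneg_left ht1 hδ0.le]
        rw [abs_sub_comm, abs_of_nonneg (by linarith)]
        linarith
      have h2 : |w - -z| < ε := by
        have : |w - -z| = δ := by
          have := hwz
          rw [show w + z = w - -z by ring] at this
          exact this
        rw [this]; exact hδε
      have h3 : |z - z| < ε := by simp [abs_zero]; linarith
      exact max_lt h1 (max_lt h2 h3)
    · -- mem D
      rw [hD]
      refine ⟨?_, ?_, hz⟩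
      · exact inv_pos.mpr hden
      · have : |w| < 1 := by rw [habsw]; linarith
        exact abs_lt.mp this
    · -- value
      show Φ₀ ξ w z = c
      rw [Φ₀, if_pos hwz0, hξinv, hwz, habsw]
      have hmax : max (|z| + δ) |z| = |z| + δ := max_eq_left (by linarith)
      rw [hmax]
      have harg : 1 + (1 + |z| + δ * t - (|z| + δ) - 1) / δ = t := by
        field_simp
        ring
      rw [harg, Υ_of_mem t ht0 ht1, ht_def]
      field_simp
  refine ⟨?_, key⟩
  intro hcont
  have hfp : (fun q : ℝ × ℝ × ℝ => Φ₀ q.1 q.2.1 q.2.2) p = 6 / π ^ 2 := by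
    rw [hp]
    show Φ₀ ((1 + |z|)⁻¹) (-z) z = 6 / π ^ 2
    rw [Φ₀, if_neg (by simp), inv_inv, abs_neg]
    rw [if_neg (by simp)]
  have hmem : (fun q : ℝ × ℝ × ℝ => Φ₀ q.1 q.2.1 q.2.2) ⁻¹' Ioi (6 / π ^ 2 / 2) ∈
      nhdsWithin p D := by
    apply hcont
    rw [hfp]
    exact Ioi_mem_nhds (by linarith)
  obtain ⟨V, hVopen, hpV, hVsub⟩ := mem_nhdsWithin.mp hmem
  obtain ⟨q, hq, hfq⟩ := key V hVopen hpV ⟨le_refl 0, by linarith⟩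
  have h0 := hVsub hq
  rw [mem_preimage] at h0
  have hfq' : Φ₀ q.1 q.2.1 q.2.2 = 0 := hfq
  rw [hfq'] at h0
  rw [mem_Ioi] at h0
  linarith
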